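/- Let V_d = ℂ² ⊗ ℂ[z]/(z^{d+1}) be the vector representation of 𝔤_d = 𝔰𝔩₂ ⊗ ℂ[z]/(z^{d+1}). Let x ∈ V_d with n = min.deg x ≤ d, and let ξ ∈ 𝔤_d be any element annihilating x with nonzero constant coefficient ξ₀. Then the stabilizer subalgebra 𝔤_d^x = {η ∈ 𝔤_d : η.x = 0} equals ℂ[z]·ξ + z^{d+1−n}·𝔤_d; in particular dim_ℂ 𝔤_d^x = (d + 1 − n) + 3n. -/

import Mathlib

open Polynomial

/-- `R = ℂ[z]/(z^{d+1})`, the truncated polynomial algebra. -/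
noncomputable abbrev Rtc (d : ℕ) := Polynomial ℂ ⧸ Ideal.span {(X : Polynomial ℂ) ^ (d + 1)}

/-- the class of `z` in `ℂ[z]/(z^{d+1})`. -/
noncomputable def zz (d : ℕ) : Rtc d := Ideal.Quotient.mk _ X

/-- `η ↦ η.mulVec x`, linear in the matrix `η`. -/
noncomputable def mulVecRight (d : ℕ) (x : Fin 2 → Rtc d) :
    Matrix (Fin 2) (Fin 2) (Rtc d) →ₗ[Rtc d] (Fin 2 → Rtc d) where
  toFun A := A.mulVec x
  map_add' A B := Matrix.add_mulVec A B x
  map_smul' c A := by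
    simp only [RingHom.id_apply]
    exact Matrix.smul_mulVec c A x

/-- The stabilizer subalgebra `𝔤_d^x` of `x` in `𝔤_d = 𝔰𝔩₂ ⊗ ℂ[z]/(z^{d+1})`, as a
`ℂ`-submodule of the `2×2` matrices over `ℂ[z]/(z^{d+1})`. -/
noncomputable def stabx (d : ℕ) (x : Fin 2 → Rtc d) :
    Submodule ℂ (Matrix (Fin 2) (Fin 2) (Rtc d)) :=
  Submodule.restrictScalars ℂ
    (LinearMap.ker (Matrix.traceLinearMap (Fin 2) (Rtc d) (Rtc d)) ⊓
      LinearMap.ker (mulVecRight d x))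

namespace Stmt4
variable {d : ℕ}

/-- evaluation at 0 -/
noncomputable def eps (d : ℕ) : Rtc d →+* ℂ :=
  Ideal.Quotient.lift _ (evalRingHom 0) (by
    intro p hp
    rw [Ideal.mem_span_singleton] at hp
    obtain ⟨q, rfl⟩ := hp
    simp [evalRingHom])

lemma eps_mk (p : Polynomial ℂ) : eps d (Ideal.Quotient.mk _ p) = p.eval 0 := rfl

lemma eps_zz : eps d (zz d) = 0 := by
  simp [zz, eps_mk]

lemma zz_pow_eq_zero {k : ℕ} (hk : d + 1 ≤ k) : (zz d : Rtc d) ^ k = 0 := by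
  have h1 : (zz d : Rtc d) ^ (d+1) = 0 := by
    rw [zz, ← map_pow, Ideal.Quotient.eq_zero_iff_mem]
    exact Ideal.subset_span rfl
  calc (zz d : Rtc d) ^ k = zz d ^ (d+1) * zz d ^ (k - (d+1)) := by
        rw [← pow_add]; congr 1; omega
    _ = 0 := by rw [h1, zero_mul]

lemma dvd_of_eps_eq_zero {r : Rtc d} (h : eps d r = 0) : ∃ s, r = zz d * s := by
  obtain ⟨p, rfl⟩ := Ideal.Quotient.mk_surjective r
  rw [eps_mk, ← coeff_zero_eq_eval_zero] at h
  obtain ⟨q, rfl⟩ := Polynomial.X_dvd_iff.mpr h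
  exact ⟨Ideal.Quotient.mk _ q, by rw [zz, ← map_mul]⟩

lemma isUnit_of_eps_ne_zero {r : Rtc d} (h : eps d r ≠ 0) : IsUnit r := by
  set c : ℂ := eps d r with hc
  have hsplit : eps d (r - algebraMap ℂ (Rtc d) c) = 0 := by
    have : eps d (algebraMap ℂ (Rtc d) c) = c := by
      have h1 : algebraMap ℂ (Rtc d) c = Ideal.Quotient.mk _ (C c) := by
        rw [← Ideal.Quotient.algebraMap_eq, ← algebraMap_eq, ← IsScalarTower.algebraMap_apply]
      rw [h1, eps_mk, eval_C]
    rw [map_sub, this, sub_self]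
  obtain ⟨s, hs⟩ := dvd_of_eps_eq_zero hsplit
  have hnil : IsNilpotent (r - algebraMap ℂ (Rtc d) c) := by
    refine ⟨d + 1, ?_⟩
    rw [hs, mul_pow, zz_pow_eq_zero le_rfl, zero_mul]
  have hu : IsUnit (algebraMap ℂ (Rtc d) c) := by
    refine (IsUnit.map _ (Ne.isUnit h))
  have := hnil.isUnit_add_left_of_commute hu (Commute.all _ _)
  simpa using this

lemma cancel_pow {m : ℕ} (hm : m ≤ d + 1) {r : Rtc d} (h : zz d ^ m * r = 0) :
    ∃ s, r = zz d ^ (d + 1 - m) * s := by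
  obtain ⟨p, rfl⟩ := Ideal.Quotient.mk_surjective r
  have : (Ideal.Quotient.mk (Ideal.span {(X : Polynomial ℂ) ^ (d + 1)})) (X ^ m * p) = 0 := by
    rw [map_mul, map_pow, ← zz]; exact h
  rw [Ideal.Quotient.eq_zero_iff_mem, Ideal.mem_span_singleton] at this
  obtain ⟨q, hq⟩ := this
  have hd : X ^ m * p = X ^ m * (X ^ (d + 1 - m) * q) := by
    rw [hq, ← mul_assoc, ← pow_add]
    congr 2
    omega
  have hp : p = X ^ (d + 1 - m) * q := by
    have := mul_left_cancel₀ (pow_ne_zero m Polynomial.X_ne_zero) hd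
    exact this
  exact ⟨Ideal.Quotient.mk _ q, by rw [hp, map_mul, map_pow, zz]⟩

end Stmt4

namespace Stmt4B
open Stmt4

noncomputable def pb (d : ℕ) : PowerBasis ℂ (Rtc d) :=
  AdjoinRoot.powerBasis (f := (X : Polynomial ℂ) ^ (d+1)) (pow_ne_zero _ X_ne_zero)

lemma pb_dim (d : ℕ) : (pb d).dim = d + 1 := by
  simp [pb]

lemma pb_gen (d : ℕ) : (pb d).gen = zz d := rfl

noncomputable def bb (d : ℕ) : Module.Basis (Fin (d+1)) ℂ (Rtc d) :=
  (pb d).basis.reindex (finCongr (pb_dim d))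

lemma bb_apply (d : ℕ) (j : Fin (d+1)) : bb d j = zz d ^ (j : ℕ) := by
  rw [bb, Module.Basis.reindex_apply, (pb d).basis_eq_pow, pb_gen]
  congr 1

lemma repr_comb {d k : ℕ} (e : Fin k → Fin (d+1)) (he : Function.Injective e)
    (c : Fin k → ℂ) (i₀ : Fin k) :
    (bb d).repr (∑ i, c i • bb d (e i)) (e i₀) = c i₀ := by
  rw [map_sum]
  have h1 : ∀ i, (bb d).repr (c i • bb d (e i)) = c i • Finsupp.single (e i) 1 := by
    intro i
    rw [map_smul, Module.Basis.repr_self]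
  simp only [h1]
  rw [Finset.sum_apply']
  rw [Finset.sum_eq_single i₀]
  · simp
  · intro i _ hne
    simp only [Finsupp.smul_apply, Finsupp.single_apply]
    rw [if_neg (fun hh => hne (he hh))]
    simp
  · intro h; exact absurd (Finset.mem_univ i₀) h

lemma repr_pow_mul_eq_zero {d k : ℕ} (s : Rtc d) (i : Fin (d+1)) (hik : (i:ℕ) < k) :
    (bb d).repr (zz d ^ k * s) i = 0 := by
  conv_lhs => rw [← Module.Basis.sum_repr (bb d) s]
  rw [Finset.mul_sum]
  have h1 : ∀ j : Fin (d+1), zz d ^ k * ((bb d).repr s j • bb d j)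
      = (bb d).repr s j • (zz d ^ (k + (j:ℕ))) := by
    intro j
    rw [mul_smul_comm, bb_apply, ← pow_add]
  simp only [h1]
  rw [map_sum, Finset.sum_apply']
  apply Finset.sum_eq_zero
  intro j _
  rw [map_smul, Finsupp.smul_apply]
  rcases le_or_gt (k + (j:ℕ)) d with hle | hlt
  · have : (zz d : Rtc d) ^ (k + (j:ℕ)) = bb d ⟨k + (j:ℕ), by omega⟩ := by
      rw [bb_apply]
    rw [this, Module.Basis.repr_self, Finsupp.single_apply, if_neg, smul_zero]
    intro hh
    have := congrArg Fin.val hh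
    simp at this
    omega
  · rw [zz_pow_eq_zero (by omega), map_zero]
    simp

end Stmt4B

namespace Stmt4
variable {d : ℕ}

lemma dvd_of_dvd_mul_isUnit {K t u : Rtc d} (hu : IsUnit u) (h : K ∣ t * u) : K ∣ t := by
  obtain ⟨w, hw⟩ := hu.exists_right_inv
  have := h.mul_right w
  rwa [mul_assoc, hw, mul_one] at this

lemma eps_eq_zero_of_pow_dvd {h : ℕ} (hh : 1 ≤ h) {r : Rtc d} (hd : zz d ^ h ∣ r) :
    eps d r = 0 := by
  obtain ⟨t, rfl⟩ := hd
  rw [map_mul, map_pow, eps_zz, zero_pow (by omega), zero_mul]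

lemma xi_pivot (ξ : Matrix (Fin 2) (Fin 2) (Rtc d)) (hξtr : ξ.trace = 0)
    (hξ0 : ¬∃ B, ξ = (zz d) • B) :
    eps d (ξ 0 0) ≠ 0 ∨ eps d (ξ 0 1) ≠ 0 ∨ eps d (ξ 1 0) ≠ 0 := by
  by_contra hc
  push_neg at hc
  obtain ⟨h1, h2, h3⟩ := hc
  rw [Matrix.trace_fin_two] at hξtr
  have h4 : ξ 1 1 = -ξ 0 0 := by linear_combination hξtr
  obtain ⟨s1, hs1⟩ := dvd_of_eps_eq_zero h1
  obtain ⟨s2, hs2⟩ := dvd_of_eps_eq_zero h2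
  obtain ⟨s3, hs3⟩ := dvd_of_eps_eq_zero h3
  refine hξ0 ⟨!![s1, s2; s3, -s1], ?_⟩
  ext i j
  fin_cases i <;> fin_cases j <;>
    simp [hs1, hs2, hs3, h4, Matrix.smul_apply, smul_eq_mul, mul_neg] <;> ring

set_option maxHeartbeats 1600000 in
lemma partA_mp {n : ℕ} (hn : n ≤ d)
    (y : Fin 2 → Rtc d) (hy : eps d (y 0) ≠ 0 ∨ eps d (y 1) ≠ 0)
    (ξ η : Matrix (Fin 2) (Fin 2) (Rtc d))
    (hξtr : ξ.trace = 0) (hηtr : η.trace = 0)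
    (hξ0 : ¬∃ B, ξ = (zz d) • B)
    (hξy : ∀ i, zz d ^ (d + 1 - n) ∣ (ξ.mulVec y) i)
    (hηy : ∀ i, zz d ^ (d + 1 - n) ∣ (η.mulVec y) i) :
    ∃ (f : Rtc d) (B : Matrix (Fin 2) (Fin 2) (Rtc d)),
      B.trace = 0 ∧ η = f • ξ + (zz d) ^ (d + 1 - n) • B := by
  set h : ℕ := d + 1 - n with hh
  have hh1 : 1 ≤ h := by omega
  set K : Rtc d := zz d ^ h with hK
  set u : Rtc d := y 0
  set v : Rtc d := y 1
  set a : Rtc d := η 0 0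
  set b : Rtc d := η 0 1
  set c : Rtc d := η 1 0
  set α : Rtc d := ξ 0 0
  set β : Rtc d := ξ 0 1
  set γ : Rtc d := ξ 1 0
  have hηe : η 1 1 = -a := by
    rw [Matrix.trace_fin_two] at hηtr; linear_combination hηtr
  have hξe : ξ 1 1 = -α := by
    rw [Matrix.trace_fin_two] at hξtr; linear_combination hξtr
  have hmv : ∀ (A : Matrix (Fin 2) (Fin 2) (Rtc d)) i,
      (A.mulVec y) i = A i 0 * u + A i 1 * v := by
    intro A i
    simp [Matrix.mulVec, dotProduct, Fin.sum_univ_two]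
    rfl
  have hη0 : K ∣ a * u + b * v := by rw [← hmv]; exact hηy 0
  have hη1 : K ∣ c * u + -a * v := by rw [← hηe, ← hmv]; exact hηy 1
  have hξ0' : K ∣ α * u + β * v := by rw [← hmv]; exact hξy 0
  have hξ1' : K ∣ γ * u + -α * v := by rw [← hξe, ← hmv]; exact hξy 1
  have hKe : ∀ {r : Rtc d}, K ∣ r → eps d r = 0 := fun hd => eps_eq_zero_of_pow_dvd hh1 hd
  rcases hy with hu | hv
  · -- u is a unit; pivot β
    have huu : IsUnit u := isUnit_of_eps_ne_zero hu
    have hβ : eps d β ≠ 0 := by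
      intro hβ0
      have e1 := hKe hξ0'
      have e2 := hKe hξ1'
      simp only [map_add, map_mul, map_neg, hβ0, zero_mul, mul_zero, add_zero] at e1 e2
      have hα0 : eps d α = 0 := by
        rcases mul_eq_zero.mp e1 with h' | h'
        · exact h'
        · exact absurd h' hu
      rw [hα0] at e2
      simp only [neg_zero, zero_mul, add_zero] at e2
      have hγ0 : eps d γ = 0 := by
        rcases mul_eq_zero.mp e2 with h' | h'
        · exact h'
        · exact absurd h' hu
      rcases xi_pivot ξ hξtr hξ0 with h' | h' | h' <;> [exact h' hα0; exact h' hβ0; exact h' hγ0]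
    have hβu : IsUnit β := isUnit_of_eps_ne_zero hβ
    obtain ⟨βi, hβi⟩ := hβu.exists_right_inv
    set f : Rtc d := b * βi with hf
    have hfβ : f * β = b := by
      rw [hf, mul_assoc, mul_comm βi β, hβi, mul_one]
    have h1 : K ∣ (a - f * α) * u := by
      have : (a - f * α) * u = (a * u + b * v) - f * (α * u + β * v) + (f * β - b) * v := by
        ring
      rw [this, hfβ, sub_self, zero_mul, add_zero]
      exact dvd_sub hη0 (hξ0'.mul_left f)
    have h1' : K ∣ a - f * α := dvd_of_dvd_mul_isUnit huu h1
    have h2' : K ∣ c - f * γ := by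
      have h2 : K ∣ (c - f * γ) * u := by
        have heq : (c - f * γ) * u
            = (c * u + -a * v) - f * (γ * u + -α * v) + (a - f * α) * v := by ring
        rw [heq]
        exact dvd_add (dvd_sub hη1 (hξ1'.mul_left f)) (h1'.mul_right v)
      exact dvd_of_dvd_mul_isUnit huu h2
    obtain ⟨p, hp⟩ := h1'
    obtain ⟨q, hq⟩ := h2'
    refine ⟨f, !![p, 0; q, -p], ?_, ?_⟩
    · rw [Matrix.trace_fin_two]; simp
    · ext i j
      fin_cases i <;> fin_cases j <;>
        simp only [Matrix.add_apply, Matrix.smul_apply, smul_eq_mul, Matrix.of_apply,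
          Matrix.cons_val', Matrix.cons_val_zero, Matrix.cons_val_one, Matrix.head_cons,
          Matrix.head_fin_const, Matrix.empty_val', Matrix.cons_val_fin_one]
      · show a = f * α + K * p
        linear_combination hp
      · show b = f * β + K * 0
        rw [mul_zero, add_zero, hfβ]
      · show c = f * γ + K * q
        linear_combination hq
      · show η 1 1 = f * ξ 1 1 + K * (-p)
        rw [hηe, hξe]
        linear_combination -hp
  · -- v is a unit; pivot γ
    have hvu : IsUnit v := isUnit_of_eps_ne_zero hv
    have hγ : eps d γ ≠ 0 := by
      intro hγ0
      have e1 := hKe hξ0'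
      have e2 := hKe hξ1'
      simp only [map_add, map_mul, map_neg, hγ0, zero_mul, mul_zero, zero_add, neg_mul] at e1 e2
      have hα0 : eps d α = 0 := by
        have : eps d α * eps d v = 0 := by linear_combination -e2
        rcases mul_eq_zero.mp this with h' | h'
        · exact h'
        · exact absurd h' hv
      rw [hα0, zero_mul, zero_add] at e1
      have hβ0 : eps d β = 0 := by
        rcases mul_eq_zero.mp e1 with h' | h'
        · exact h'
        · exact absurd h' hv
      rcases xi_pivot ξ hξtr hξ0 with h' | h' | h' <;> [exact h' hα0; exact h' hβ0; exact h' hγ0]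
    have hγu : IsUnit γ := isUnit_of_eps_ne_zero hγ
    obtain ⟨γi, hγi⟩ := hγu.exists_right_inv
    set f : Rtc d := c * γi with hf
    have hfγ : f * γ = c := by
      rw [hf, mul_assoc, mul_comm γi γ, hγi, mul_one]
    have h1' : K ∣ a - f * α := by
      apply dvd_of_dvd_mul_isUnit hvu
      have heq : (a - f * α) * v
          = -(c * u + -a * v) + f * (γ * u + -α * v) + (c - f * γ) * u := by ring
      rw [heq, hfγ, sub_self, zero_mul, add_zero]
      exact dvd_add (dvd_neg.mpr hη1) (hξ1'.mul_left f)
    have h2' : K ∣ b - f * β := by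
      apply dvd_of_dvd_mul_isUnit hvu
      have heq : (b - f * β) * v
          = (a * u + b * v) - f * (α * u + β * v) - (a - f * α) * u := by ring
      rw [heq]
      exact dvd_sub (dvd_sub hη0 (hξ0'.mul_left f)) (h1'.mul_right u)
    obtain ⟨p, hp⟩ := h1'
    obtain ⟨q, hq⟩ := h2'
    refine ⟨f, !![p, q; 0, -p], ?_, ?_⟩
    · rw [Matrix.trace_fin_two]; simp
    · ext i j
      fin_cases i <;> fin_cases j <;>
        simp only [Matrix.add_apply, Matrix.smul_apply, smul_eq_mul, Matrix.of_apply,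
          Matrix.cons_val', Matrix.cons_val_zero, Matrix.cons_val_one, Matrix.head_cons,
          Matrix.head_fin_const, Matrix.empty_val', Matrix.cons_val_fin_one]
      · show a = f * α + K * p
        linear_combination hp
      · show b = f * β + K * q
        linear_combination hq
      · show c = f * γ + K * 0
        rw [mul_zero, add_zero, hfγ]
      · show η 1 1 = f * ξ 1 1 + K * (-p)
        rw [hηe, hξe]
        linear_combination -hp

open Stmt4B

noncomputable def Hm (d : ℕ) : Matrix (Fin 2) (Fin 2) (Rtc d) := !![1, 0; 0, -1]
noncomputable def Em (d : ℕ) : Matrix (Fin 2) (Fin 2) (Rtc d) := !![0, 1; 0, 0]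
noncomputable def Fm (d : ℕ) : Matrix (Fin 2) (Fin 2) (Rtc d) := !![0, 0; 1, 0]

abbrev Idx (d n : ℕ) := Fin (d + 1 - n) ⊕ (Fin n ⊕ Fin n ⊕ Fin n)

noncomputable def gens (d n : ℕ) (ξ : Matrix (Fin 2) (Fin 2) (Rtc d)) :
    Idx d n → Matrix (Fin 2) (Fin 2) (Rtc d)
  | .inl i => zz d ^ (i : ℕ) • ξ
  | .inr (.inl j) => zz d ^ (d + 1 - n + (j : ℕ)) • Hm d
  | .inr (.inr (.inl j)) => zz d ^ (d + 1 - n + (j : ℕ)) • Em d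
  | .inr (.inr (.inr j)) => zz d ^ (d + 1 - n + (j : ℕ)) • Fm d

noncomputable def smulLin (M : Matrix (Fin 2) (Fin 2) (Rtc d)) :
    Rtc d →ₗ[ℂ] Matrix (Fin 2) (Fin 2) (Rtc d) where
  toFun r := r • M
  map_add' r s := add_smul r s M
  map_smul' c r := smul_assoc c r M

lemma span_helper {S : Submodule ℂ (Matrix (Fin 2) (Fin 2) (Rtc d))}
    (L : Rtc d →ₗ[ℂ] Matrix (Fin 2) (Fin 2) (Rtc d))
    (hL : ∀ i : Fin (d + 1), L (zz d ^ (i : ℕ)) ∈ S) (r : Rtc d) : L r ∈ S := by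
  have hr : L r = ∑ i, (bb d).repr r i • L (bb d i) := by
    conv_lhs => rw [← Module.Basis.sum_repr (bb d) r]
    rw [map_sum]
    refine Finset.sum_congr rfl fun i _ => ?_
    rw [map_smul]
  rw [hr]
  refine Submodule.sum_mem _ fun i _ => ?_
  refine S.smul_mem _ ?_
  rw [bb_apply]
  exact hL i

lemma mem_span_G {n : ℕ} (hn : n ≤ d) {ξ : Matrix (Fin 2) (Fin 2) (Rtc d)}
    (M : Matrix (Fin 2) (Fin 2) (Rtc d))
    (hM : ∀ j : Fin n, zz d ^ (d + 1 - n + (j : ℕ)) • M ∈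
      Submodule.span ℂ (Set.range (gens d n ξ))) (r : Rtc d) :
    (zz d ^ (d + 1 - n) * r) • M ∈ Submodule.span ℂ (Set.range (gens d n ξ)) := by
  have := span_helper (S := Submodule.span ℂ (Set.range (gens d n ξ)))
    ((smulLin M).comp (LinearMap.mulLeft ℂ (zz d ^ (d + 1 - n)))) ?_ r
  · exact this
  intro i
  simp only [LinearMap.comp_apply, LinearMap.mulLeft_apply, smulLin, LinearMap.coe_mk,
    AddHom.coe_mk]
  rw [← pow_add]
  rcases lt_or_ge (i : ℕ) n with hi | hi
  · exact hM ⟨i, hi⟩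
  · have h0 : zz d ^ (d + 1 - n + (i : ℕ)) • M = (0 : Matrix (Fin 2) (Fin 2) (Rtc d)) := by
      ext a b'
      rw [Matrix.smul_apply, zz_pow_eq_zero (by omega)]
      simp
    rw [h0]
    exact Submodule.zero_mem _

lemma spanF {n : ℕ} (hn : n ≤ d) {ξ : Matrix (Fin 2) (Fin 2) (Rtc d)}
    (hgH : ∀ j : Fin n, zz d ^ (d + 1 - n + (j : ℕ)) • Hm d ∈
      Submodule.span ℂ (Set.range (gens d n ξ)))
    (hgE : ∀ j : Fin n, zz d ^ (d + 1 - n + (j : ℕ)) • Em d ∈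
      Submodule.span ℂ (Set.range (gens d n ξ)))
    (hgF : ∀ j : Fin n, zz d ^ (d + 1 - n + (j : ℕ)) • Fm d ∈
      Submodule.span ℂ (Set.range (gens d n ξ)))
    (C : Matrix (Fin 2) (Fin 2) (Rtc d)) (hC : C.trace = 0) :
    zz d ^ (d + 1 - n) • C ∈ Submodule.span ℂ (Set.range (gens d n ξ)) := by
  have hC' : C 1 1 = -C 0 0 := by
    rw [Matrix.trace_fin_two] at hC; linear_combination hC
  have hdec : zz d ^ (d + 1 - n) • C = (zz d ^ (d + 1 - n) * C 0 0) • Hm d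
      + (zz d ^ (d + 1 - n) * C 0 1) • Em d + (zz d ^ (d + 1 - n) * C 1 0) • Fm d := by
    ext i j
    fin_cases i <;> fin_cases j <;>
      simp [Hm, Em, Fm, hC', Matrix.smul_apply, smul_eq_mul, mul_neg] <;> ring
  rw [hdec]
  exact Submodule.add_mem _
    (Submodule.add_mem _ (mem_span_G hn _ hgH _) (mem_span_G hn _ hgE _))
    (mem_span_G hn _ hgF _)
end Stmt4

namespace Stmt4
variable {d : ℕ}

lemma smul_mulVec' (r : Rtc d) (M : Matrix (Fin 2) (Fin 2) (Rtc d)) (v : Fin 2 → Rtc d) :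
    (r • M).mulVec v = r • M.mulVec v := by
  funext i
  simp only [Matrix.mulVec, dotProduct, Fin.sum_univ_two, Matrix.smul_apply,
    Pi.smul_apply, smul_eq_mul]
  ring

lemma mulVec_smul' (r : Rtc d) (M : Matrix (Fin 2) (Fin 2) (Rtc d)) (v : Fin 2 → Rtc d) :
    M.mulVec (r • v) = r • M.mulVec v := by
  funext i
  simp only [Matrix.mulVec, dotProduct, Fin.sum_univ_two, Matrix.smul_apply,
    Pi.smul_apply, smul_eq_mul]
  ring

lemma smul_smul' (r s : Rtc d) (v : Fin 2 → Rtc d) : r • s • v = (r * s) • v := by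
  funext i
  simp only [Pi.smul_apply, smul_eq_mul]
  ring

lemma smul_zero_vec (r : Rtc d) : r • (0 : Fin 2 → Rtc d) = 0 := by
  funext i
  simp only [Pi.smul_apply, Pi.zero_apply, smul_eq_mul, mul_zero]

lemma zero_smul_vec (v : Fin 2 → Rtc d) : (0 : Rtc d) • v = 0 := by
  funext i
  simp only [Pi.smul_apply, smul_eq_mul, zero_mul, Pi.zero_apply]

lemma trace_smul' (r : Rtc d) (M : Matrix (Fin 2) (Fin 2) (Rtc d)) (hM : M.trace = 0) :
    (r • M).trace = 0 := by
  rw [Matrix.trace_fin_two] at hM ⊢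
  rw [Matrix.smul_apply, Matrix.smul_apply, smul_eq_mul, smul_eq_mul]
  linear_combination r * hM

set_option maxHeartbeats 1000000 in
lemma mem_stabx_iff (x : Fin 2 → Rtc d) (A : Matrix (Fin 2) (Fin 2) (Rtc d)) :
    A ∈ stabx d x ↔ A.trace = 0 ∧ A.mulVec x = 0 := by
  rw [stabx, Submodule.restrictScalars_mem, Submodule.mem_inf, LinearMap.mem_ker,
    LinearMap.mem_ker]
  exact Iff.rfl

lemma trace_Hm : (Hm d).trace = 0 := by simp [Hm, Matrix.trace_fin_two]
lemma trace_Em : (Em d).trace = 0 := by simp [Em, Matrix.trace_fin_two]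
lemma trace_Fm : (Fm d).trace = 0 := by simp [Fm, Matrix.trace_fin_two]

lemma smul_mem_stab {n : ℕ} (hn : n ≤ d) (x y : Fin 2 → Rtc d) (hxy : x = zz d ^ n • y)
    (M : Matrix (Fin 2) (Fin 2) (Rtc d)) (hM : M.trace = 0) (j : ℕ) (hj : j < n) :
    zz d ^ (d + 1 - n + j) • M ∈ stabx d x := by
  rw [mem_stabx_iff]
  refine ⟨trace_smul' _ _ hM, ?_⟩
  rw [hxy, smul_mulVec', mulVec_smul', smul_smul', ← pow_add,
    zz_pow_eq_zero (by omega), zero_smul_vec]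

lemma gens_mem_stab {n : ℕ} (hn : n ≤ d) (x y : Fin 2 → Rtc d) (hxy : x = zz d ^ n • y)
    (ξ : Matrix (Fin 2) (Fin 2) (Rtc d)) (hξtr : ξ.trace = 0) (hξx : ξ.mulVec x = 0) :
    ∀ i, gens d n ξ i ∈ stabx d x := by
  rintro (i | j | j | j)
  · have hg : gens d n ξ (Sum.inl i) = zz d ^ (i : ℕ) • ξ := rfl
    rw [hg, mem_stabx_iff]
    refine ⟨trace_smul' _ _ hξtr, ?_⟩
    rw [smul_mulVec', hξx, smul_zero_vec]
  · exact smul_mem_stab hn x y hxy _ trace_Hm _ j.isLt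
  · exact smul_mem_stab hn x y hxy _ trace_Em _ j.isLt
  · exact smul_mem_stab hn x y hxy _ trace_Fm _ j.isLt
end Stmt4

namespace Stmt4
open Stmt4B
variable {d n : ℕ}

lemma smul_smul_mat (r s : Rtc d) (M : Matrix (Fin 2) (Fin 2) (Rtc d)) :
    r • s • M = (r * s) • M := by
  ext i j
  simp only [Matrix.smul_apply, smul_eq_mul]
  ring

lemma dvd_csmul (K r : Rtc d) (c : ℂ) (hd : K ∣ r) : K ∣ c • r := by
  obtain ⟨t, rfl⟩ := hd
  exact ⟨c • t, (mul_smul_comm c K t).symm⟩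

lemma sum_csmul_smul {k : ℕ} (c : Fin k → ℂ) (w : Fin k → Rtc d)
    (M : Matrix (Fin 2) (Fin 2) (Rtc d)) :
    ∑ i, c i • (w i • M) = (∑ i, c i • w i) • M := by
  rw [show (∑ i, c i • w i) • M = smulLin M (∑ i, c i • w i) from rfl, map_sum]
  refine Finset.sum_congr rfl fun i _ => ?_
  rw [map_smul]
  rfl

lemma stab_le_span (hn : n ≤ d) (x : Fin 2 → Rtc d)
    (ξ : Matrix (Fin 2) (Fin 2) (Rtc d)) (hξtr : ξ.trace = 0)
    (hpart : ∀ η : Matrix (Fin 2) (Fin 2) (Rtc d), η.trace = 0 → η.mulVec x = 0 →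
      ∃ (f : Rtc d) (B : Matrix (Fin 2) (Fin 2) (Rtc d)),
        B.trace = 0 ∧ η = f • ξ + (zz d) ^ (d + 1 - n) • B) :
    stabx d x ≤ Submodule.span ℂ (Set.range (gens d n ξ)) := by
  have hH : ∀ j : Fin n, zz d ^ (d + 1 - n + (j : ℕ)) • Hm d ∈
      Submodule.span ℂ (Set.range (gens d n ξ)) :=
    fun j => Submodule.subset_span ⟨Sum.inr (Sum.inl j), rfl⟩
  have hE : ∀ j : Fin n, zz d ^ (d + 1 - n + (j : ℕ)) • Em d ∈
      Submodule.span ℂ (Set.range (gens d n ξ)) :=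
    fun j => Submodule.subset_span ⟨Sum.inr (Sum.inr (Sum.inl j)), rfl⟩
  have hF : ∀ j : Fin n, zz d ^ (d + 1 - n + (j : ℕ)) • Fm d ∈
      Submodule.span ℂ (Set.range (gens d n ξ)) :=
    fun j => Submodule.subset_span ⟨Sum.inr (Sum.inr (Sum.inr j)), rfl⟩
  intro η hη
  rw [mem_stabx_iff] at hη
  obtain ⟨f, B, hBtr, rfl⟩ := hpart η hη.1 hη.2
  refine Submodule.add_mem _ ?_ (spanF hn hH hE hF B hBtr)
  refine span_helper (smulLin ξ) ?_ f
  intro i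
  show zz d ^ (i : ℕ) • ξ ∈ _
  rcases lt_or_ge (i : ℕ) (d + 1 - n) with hi | hi
  · exact Submodule.subset_span ⟨Sum.inl ⟨i, hi⟩, rfl⟩
  · have heq : zz d ^ (i : ℕ) • ξ
        = zz d ^ (d + 1 - n) • (zz d ^ ((i : ℕ) - (d + 1 - n)) • ξ) := by
      rw [smul_smul_mat, ← pow_add]
      congr 2
      omega
    rw [heq]
    exact spanF hn hH hE hF _ (trace_smul' _ _ hξtr)

lemma span_eq_stab (hn : n ≤ d) (x y : Fin 2 → Rtc d) (hxy : x = zz d ^ n • y)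
    (ξ : Matrix (Fin 2) (Fin 2) (Rtc d)) (hξtr : ξ.trace = 0) (hξx : ξ.mulVec x = 0)
    (hpart : ∀ η : Matrix (Fin 2) (Fin 2) (Rtc d), η.trace = 0 → η.mulVec x = 0 →
      ∃ (f : Rtc d) (B : Matrix (Fin 2) (Fin 2) (Rtc d)),
        B.trace = 0 ∧ η = f • ξ + (zz d) ^ (d + 1 - n) • B) :
    Submodule.span ℂ (Set.range (gens d n ξ)) = stabx d x := by
  refine le_antisymm ?_ (stab_le_span hn x ξ hξtr hpart)
  rw [Submodule.span_le]
  rintro _ ⟨i, rfl⟩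
  exact gens_mem_stab hn x y hxy ξ hξtr hξx i

set_option maxHeartbeats 1000000 in
lemma gens_indep (hn : n ≤ d)
    (ξ : Matrix (Fin 2) (Fin 2) (Rtc d)) (hξtr : ξ.trace = 0)
    (hξ0 : ¬∃ B, ξ = (zz d) • B) :
    LinearIndependent ℂ (gens d n ξ) := by
  rw [Fintype.linearIndependent_iff]
  intro g hg
  set h : ℕ := d + 1 - n with hh
  set f : Rtc d := ∑ i : Fin h, g (Sum.inl i) • zz d ^ (i : ℕ) with hf
  set PP : Rtc d := ∑ j : Fin n, g (Sum.inr (Sum.inl j)) • zz d ^ (h + (j : ℕ)) with hPP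
  set QQ : Rtc d := ∑ j : Fin n, g (Sum.inr (Sum.inr (Sum.inl j))) • zz d ^ (h + (j : ℕ))
    with hQQ
  set SS : Rtc d := ∑ j : Fin n, g (Sum.inr (Sum.inr (Sum.inr j))) • zz d ^ (h + (j : ℕ))
    with hSS
  have hsplit : ∑ i, g i • gens d n ξ i
      = f • ξ + (PP • Hm d + (QQ • Em d + SS • Fm d)) := by
    rw [Fintype.sum_sum_type, Fintype.sum_sum_type, Fintype.sum_sum_type]
    simp only [gens]
    rw [sum_csmul_smul, sum_csmul_smul, sum_csmul_smul, sum_csmul_smul]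
  rw [hsplit] at hg
  have e00 : f * ξ 0 0 + PP = 0 := by
    have h' := congrFun (congrFun hg 0) 0
    simp only [Matrix.add_apply, Matrix.smul_apply, smul_eq_mul, Hm, Em, Fm, Matrix.of_apply,
      Matrix.cons_val', Matrix.cons_val_zero, Matrix.cons_val_one, Matrix.head_cons,
      Matrix.empty_val', Matrix.cons_val_fin_one, Matrix.head_fin_const,
      Matrix.zero_apply] at h'
    linear_combination h'
  have e01 : f * ξ 0 1 + QQ = 0 := by
    have h' := congrFun (congrFun hg 0) 1
    simp only [Matrix.add_apply, Matrix.smul_apply, smul_eq_mul, Hm, Em, Fm, Matrix.of_apply,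
      Matrix.cons_val', Matrix.cons_val_zero, Matrix.cons_val_one, Matrix.head_cons,
      Matrix.empty_val', Matrix.cons_val_fin_one, Matrix.head_fin_const,
      Matrix.zero_apply] at h'
    linear_combination h'
  have e10 : f * ξ 1 0 + SS = 0 := by
    have h' := congrFun (congrFun hg 1) 0
    simp only [Matrix.add_apply, Matrix.smul_apply, smul_eq_mul, Hm, Em, Fm, Matrix.of_apply,
      Matrix.cons_val', Matrix.cons_val_zero, Matrix.cons_val_one, Matrix.head_cons,
      Matrix.empty_val', Matrix.cons_val_fin_one, Matrix.head_fin_const,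
      Matrix.zero_apply] at h'
    linear_combination h'
  have hKP : zz d ^ h ∣ PP :=
    Finset.dvd_sum fun j _ => dvd_csmul _ _ _ ⟨zz d ^ (j : ℕ), by rw [← pow_add]⟩
  have hKQ : zz d ^ h ∣ QQ :=
    Finset.dvd_sum fun j _ => dvd_csmul _ _ _ ⟨zz d ^ (j : ℕ), by rw [← pow_add]⟩
  have hKS : zz d ^ h ∣ SS :=
    Finset.dvd_sum fun j _ => dvd_csmul _ _ _ ⟨zz d ^ (j : ℕ), by rw [← pow_add]⟩
  have hKf : zz d ^ h ∣ f := by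
    rcases xi_pivot ξ hξtr hξ0 with hp | hp | hp
    · refine dvd_of_dvd_mul_isUnit (isUnit_of_eps_ne_zero hp) ?_
      have : f * ξ 0 0 = -PP := by linear_combination e00
      rw [this]
      exact dvd_neg.mpr hKP
    · refine dvd_of_dvd_mul_isUnit (isUnit_of_eps_ne_zero hp) ?_
      have : f * ξ 0 1 = -QQ := by linear_combination e01
      rw [this]
      exact dvd_neg.mpr hKQ
    · refine dvd_of_dvd_mul_isUnit (isUnit_of_eps_ne_zero hp) ?_
      have : f * ξ 1 0 = -SS := by linear_combination e10
      rw [this]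
      exact dvd_neg.mpr hKS
  obtain ⟨s, hs⟩ := hKf
  have hhd : h ≤ d + 1 := by omega
  set e1 : Fin h → Fin (d + 1) := fun i => ⟨(i : ℕ), by omega⟩ with he1
  have he1inj : Function.Injective e1 := by
    intro i j hij
    have := congrArg Fin.val hij
    simpa [he1, Fin.ext_iff] using this
  have hfb : f = ∑ i : Fin h, g (Sum.inl i) • bb d (e1 i) := by
    rw [hf]
    refine Finset.sum_congr rfl fun i _ => ?_
    rw [bb_apply]
  have hginl : ∀ i₀ : Fin h, g (Sum.inl i₀) = 0 := by
    intro i₀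
    have h1 : (bb d).repr f (e1 i₀) = g (Sum.inl i₀) := by
      rw [hfb]
      exact repr_comb e1 he1inj _ i₀
    have h2 : (bb d).repr f (e1 i₀) = 0 := by
      rw [hs]
      exact repr_pow_mul_eq_zero s (e1 i₀) i₀.isLt
    rw [← h1, h2]
  have hf0 : f = 0 := by
    rw [hf]
    refine Finset.sum_eq_zero fun i _ => ?_
    rw [hginl i, zero_smul]
  have hPP0 : PP = 0 := by linear_combination e00 - ξ 0 0 * hf0
  have hQQ0 : QQ = 0 := by linear_combination e01 - ξ 0 1 * hf0
  have hSS0 : SS = 0 := by linear_combination e10 - ξ 1 0 * hf0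
  set e2 : Fin n → Fin (d + 1) := fun j => ⟨h + (j : ℕ), by omega⟩ with he2
  have he2inj : Function.Injective e2 := by
    intro i j hij
    have := congrArg Fin.val hij
    simpa [he2, Fin.ext_iff] using this
  have hcoefP : ∀ (c : Fin n → ℂ), (∑ j : Fin n, c j • zz d ^ (h + (j : ℕ))) = 0 →
      ∀ j₀, c j₀ = 0 := by
    intro c hc j₀
    have hb : (∑ j : Fin n, c j • zz d ^ (h + (j : ℕ)))
        = ∑ j : Fin n, c j • bb d (e2 j) := by
      refine Finset.sum_congr rfl fun j _ => ?_
      rw [bb_apply]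
    have h1 : (bb d).repr (∑ j : Fin n, c j • bb d (e2 j)) (e2 j₀) = c j₀ :=
      repr_comb e2 he2inj _ j₀
    rw [← hb, hc] at h1
    rw [← h1, map_zero]
    rfl
  rintro (i | j | j | j)
  · exact hginl i
  · exact hcoefP _ hPP0 j
  · exact hcoefP _ hQQ0 j
  · exact hcoefP _ hSS0 j
end Stmt4

namespace Stmt4
variable {d : ℕ}

lemma add_mulVec' (A B : Matrix (Fin 2) (Fin 2) (Rtc d)) (v : Fin 2 → Rtc d) :
    (A + B).mulVec v = A.mulVec v + B.mulVec v := by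
  funext i
  simp only [Matrix.mulVec, dotProduct, Fin.sum_univ_two, Matrix.add_apply,
    Pi.add_apply]
  ring

end Stmt4

open Stmt4 Stmt4B in
set_option maxHeartbeats 1000000 in
/-- if `x ∈ V_d` has `min.deg x = n ≤ d` and `ξ ∈ 𝔤_d` annihilates `x` with
nonzero constant coefficient, then `𝔤_d^x = ℂ[z]·ξ + z^{d+1−n}·𝔤_d`, and
`dim_ℂ 𝔤_d^x = (d+1−n) + 3n`. -/
theorem stmt4 (d n : ℕ) (hn : n ≤ d) (x : Fin 2 → Rtc d)
    (hdiv : ∃ y, x = (zz d) ^ n • y)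
    (hndiv : ¬∃ y, x = (zz d) ^ (n + 1) • y)
    (ξ : Matrix (Fin 2) (Fin 2) (Rtc d))
    (hξtr : ξ.trace = 0) (hξx : ξ.mulVec x = 0)
    (hξ0 : ¬∃ B, ξ = (zz d) • B) :
    (∀ η : Matrix (Fin 2) (Fin 2) (Rtc d),
      (η.trace = 0 ∧ η.mulVec x = 0) ↔
        ∃ (f : Rtc d) (B : Matrix (Fin 2) (Fin 2) (Rtc d)),
          B.trace = 0 ∧ η = f • ξ + (zz d) ^ (d + 1 - n) • B) ∧
    Module.finrank ℂ (stabx d x) = (d + 1 - n) + 3 * n := by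
  obtain ⟨y, hxy⟩ := hdiv
  have hy : eps d (y 0) ≠ 0 ∨ eps d (y 1) ≠ 0 := by
    by_contra hcon
    push_neg at hcon
    obtain ⟨s0, h0⟩ := dvd_of_eps_eq_zero hcon.1
    obtain ⟨s1, h1⟩ := dvd_of_eps_eq_zero hcon.2
    refine hndiv ⟨![s0, s1], ?_⟩
    funext i
    fin_cases i
    · show x 0 = zz d ^ (n + 1) * s0
      have hxi := congrFun hxy 0
      simp only [Pi.smul_apply, smul_eq_mul] at hxi
      rw [hxi]
      linear_combination zz d ^ n * h0
    · show x 1 = zz d ^ (n + 1) * s1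
      have hxi := congrFun hxy 1
      simp only [Pi.smul_apply, smul_eq_mul] at hxi
      rw [hxi]
      linear_combination zz d ^ n * h1
  have hdvd : ∀ A : Matrix (Fin 2) (Fin 2) (Rtc d), A.mulVec x = 0 →
      ∀ i, zz d ^ (d + 1 - n) ∣ (A.mulVec y) i := by
    intro A hA i
    have h1 : zz d ^ n • A.mulVec y = 0 := by
      rw [← mulVec_smul', ← hxy, hA]
    have h2 : zz d ^ n * (A.mulVec y) i = 0 := by
      have := congrFun h1 i
      simpa only [Pi.smul_apply, smul_eq_mul, Pi.zero_apply] using this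
    obtain ⟨s, hs⟩ := cancel_pow (by omega) h2
    exact ⟨s, hs⟩
  have hpart : ∀ η : Matrix (Fin 2) (Fin 2) (Rtc d), η.trace = 0 → η.mulVec x = 0 →
      ∃ (f : Rtc d) (B : Matrix (Fin 2) (Fin 2) (Rtc d)),
        B.trace = 0 ∧ η = f • ξ + (zz d) ^ (d + 1 - n) • B :=
    fun η h1 h2 => partA_mp hn y hy ξ η hξtr h1 hξ0 (hdvd ξ hξx) (hdvd η h2)
  have hrev : ∀ (f : Rtc d) (B : Matrix (Fin 2) (Fin 2) (Rtc d)), B.trace = 0 →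
      (f • ξ + (zz d) ^ (d + 1 - n) • B).trace = 0 ∧
      (f • ξ + (zz d) ^ (d + 1 - n) • B).mulVec x = 0 := by
    intro f B hB
    constructor
    · have h1 := hξtr
      rw [Matrix.trace_fin_two] at h1
      have h2 := hB
      rw [Matrix.trace_fin_two] at h2
      rw [Matrix.trace_fin_two]
      simp only [Matrix.add_apply, Matrix.smul_apply, smul_eq_mul]
      linear_combination f * h1 + zz d ^ (d + 1 - n) * h2
    · rw [add_mulVec', smul_mulVec', smul_mulVec', hξx, smul_zero_vec, hxy, mulVec_smul',
        smul_smul', ← pow_add, show d + 1 - n + n = d + 1 by omega, zz_pow_eq_zero le_rfl,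
        zero_smul_vec, add_zero]
  constructor
  · intro η
    constructor
    · rintro ⟨h1, h2⟩
      exact hpart η h1 h2
    · rintro ⟨f, B, hB, rfl⟩
      exact hrev f B hB
  · have hspan := span_eq_stab hn x y hxy ξ hξtr hξx hpart
    rw [← hspan, finrank_span_eq_card (gens_indep hn ξ hξtr hξ0)]
    simp only [Fintype.card_sum, Fintype.card_fin]
    omega
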